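/- The expected residual map Φ is concave with respect to the psd order: for psd matrices A, H (with positive traces) and θ ∈ [0,1], θΦ(A) + (1-θ)Φ(H) ⪯ Φ(θA + (1-θ)H), where X ⪯ Y means Y - X is psd. -/

import Mathlib

/-- The expected residual map `Φ(M) = M - M²/tr(M)`. -/
noncomputable def Phi {N : ℕ} (M : Matrix (Fin N) (Fin N) ℝ) : Matrix (Fin N) (Fin N) ℝ :=
  M - M.trace⁻¹ • (M * M)

lemma psd_smul_aux {n : ℕ} {M : Matrix (Fin n) (Fin n) ℝ} (hM : M.PosSemidef) {c : ℝ}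
    (hc : 0 ≤ c) : (c • M).PosSemidef := by
  rw [Matrix.posSemidef_iff_dotProduct_mulVec] at hM ⊢
  refine ⟨?_, fun x => ?_⟩
  · rw [Matrix.IsHermitian, Matrix.conjTranspose_smul, hM.1.eq]
    simp
  have := hM.2 x
  simp only [Matrix.smul_mulVec, dotProduct_smul, smul_eq_mul] at *
  exact mul_nonneg hc this

/-- `Φ` is concave with respect to the psd order. -/
theorem phi_concave {N : ℕ} (A H : Matrix (Fin N) (Fin N) ℝ)
    (hA : A.PosSemidef) (hH : H.PosSemidef)
    (htrA : 0 < A.trace) (htrH : 0 < H.trace)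
    (θ : ℝ) (hθ : θ ∈ Set.Icc (0 : ℝ) 1) :
    (Phi (θ • A + (1 - θ) • H) - (θ • Phi A + (1 - θ) • Phi H)).PosSemidef := by
  obtain ⟨hθ0, hθ1⟩ := hθ
  rcases eq_or_lt_of_le hθ0 with h0 | h0
  · simp [← h0, Phi, Matrix.PosSemidef.zero]
  rcases eq_or_lt_of_le hθ1 with h1 | h1
  · simp [h1, Phi, Matrix.PosSemidef.zero]
  -- main case 0 < θ < 1
  set s : ℝ := θ * A.trace with hs_def
  set t : ℝ := (1 - θ) * H.trace with ht_def
  have hs : 0 < s := mul_pos h0 htrA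
  have ht : 0 < t := mul_pos (by linarith) htrH
  have hst : 0 < s + t := by linarith
  have htrM : (θ • A + (1 - θ) • H).trace = s + t := by
    simp [Matrix.trace_add, Matrix.trace_smul, hs_def, ht_def, smul_eq_mul]
  set C : Matrix (Fin N) (Fin N) ℝ := t • (θ • A) - s • ((1 - θ) • H) with hC_def
  have hCsymm : C.conjTranspose = C := by
    ext i j
    simp only [hC_def, Matrix.conjTranspose_apply, Matrix.sub_apply, Matrix.smul_apply,
      smul_eq_mul, star_trivial, ← hA.1.apply j i, ← hH.1.apply j i]
  have key : Phi (θ • A + (1 - θ) • H) - (θ • Phi A + (1 - θ) • Phi H)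
      = (s * t * (s + t))⁻¹ • (C.conjTranspose * C) := by
    rw [hCsymm]
    unfold Phi
    rw [htrM]
    have hAinv : A.trace⁻¹ = θ * s⁻¹ := by
      field_simp [hs_def]
      linarith [hs_def]
    have hHinv : H.trace⁻¹ = (1 - θ) * t⁻¹ := by
      rw [ht_def, mul_inv, ← mul_assoc, mul_inv_cancel₀ (by linarith : (1:ℝ) - θ ≠ 0), one_mul]
    rw [hAinv, hHinv, hC_def]
    simp only [add_mul, mul_add, sub_mul, mul_sub, smul_mul_assoc, mul_smul_comm, smul_smul,
      smul_sub, smul_add]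
    match_scalars <;> (field_simp; try ring)
  rw [key]
  exact psd_smul_aux (Matrix.posSemidef_conjTranspose_mul_self C)
    (by positivity)
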